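/- (Theorem 2(i).) Under assumptions A1 and A2 with parameter θ ≥ 0, if u : S → ℝ is strictly positive and finite and satisfies ∑_{y∈S} B(x,y)·u(y) = λ*·u(x) for every x ∈ S (all series converging), then there exists a constant c > 0 such that u(x) = c·u*(x) for every x ∈ S, where u*(x) = ∑_{n≥1} e^{θn}·f_n(x). -/
import Mathlib


/-- Matrix powers: `B^0 = I`, `B^{n+1}(x,y) = ∑_w B^n(x,w) B(w,y)`. -/
noncomputable def matPow {S : Type*} [DecidableEq S] (B : S → S → ℝ) : ℕ → S → S → ℝ
  | 0 => fun x y => if x = y then (1 : ℝ) else 0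
  | n + 1 => fun x y => ∑' w, matPow B n x w * B w y

/-- First-return quantities: `fret B z n x` is the probability that the killed chain
with sub-stochastic transition matrix `B`, started at `x`, first hits `z` at time `n`
without having been killed: `f_1(x) = B(x,z)`, `f_{n+1}(x) = ∑_{w ≠ z} B(x,w) f_n(w)`.
(The value at `n = 0` is set to `0` by convention.) -/
noncomputable def fret {S : Type*} [DecidableEq S] (B : S → S → ℝ) (z : S) : ℕ → S → ℝ
  | 0 => fun _ => 0
  | 1 => fun x => B x z
  | n + 2 => fun x => ∑' w, if w = z then 0 else B x w * fret B z (n + 1) w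

/-- `grow B z j y` is the probability that the killed chain started at `z` is at `y`
at time `j` without having been killed or having returned to `z`:
`g_0 = δ_z`, and for `j ≥ 1`, `g_j(z) = 0` and `g_j(y) = ∑_x g_{j-1}(x) B(x,y)` for `y ≠ z`. -/
noncomputable def grow {S : Type*} [DecidableEq S] (B : S → S → ℝ) (z : S) : ℕ → S → ℝ
  | 0 => fun y => if y = z then 1 else 0
  | j + 1 => fun y => if y = z then 0 else ∑' x, grow B z j x * B x y

/-- The Perron-Frobenius column eigenvector candidate
`u*(x) = ∑_{n ≥ 1} e^{θ n} f_n(x)`. -/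
noncomputable def uStar {S : Type*} [DecidableEq S] (B : S → S → ℝ) (z : S) (θ : ℝ)
    (x : S) : ℝ :=
  ∑' n : ℕ, Real.exp (θ * ((n : ℝ) + 1)) * fret B z (n + 1) x

/-- The Perron-Frobenius row eigenvector candidate
`η*(y) = ∑_{j ≥ 0} e^{θ j} g_j(y)`. -/
noncomputable def etaStar {S : Type*} [DecidableEq S] (B : S → S → ℝ) (z : S) (θ : ℝ)
    (y : S) : ℝ :=
  ∑' j : ℕ, Real.exp (θ * (j : ℝ)) * grow B z j y

section Aux

variable {S : Type*} [Countable S] [DecidableEq S]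

/-- Remainder sequence: `R_0 = u`, `R_{n+1}(x) = ∑_{w ≠ z} B(x,w) R_n(w)`. -/
noncomputable def Rrem (B : S → S → ℝ) (z : S) (u : S → ℝ) : ℕ → S → ℝ
  | 0 => u
  | n + 1 => fun x => ∑' w, if w = z then 0 else B x w * Rrem B z u n w

variable {B : S → S → ℝ} {z : S} {u : S → ℝ} {θ : ℝ}

lemma fret_nonneg (hnn : ∀ x y, 0 ≤ B x y) : ∀ n x, 0 ≤ fret B z n x := by
  intro n
  induction n using Nat.strong_induction_on with
  | _ n ih =>
    match n with
    | 0 => intro x; simp [fret]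
    | 1 => intro x; simpa [fret] using hnn x z
    | (m + 2) =>
      intro x
      have : 0 ≤ ∑' w, if w = z then 0 else B x w * fret B z (m + 1) w :=
        tsum_nonneg fun w => by
          by_cases h : w = z
          · simp [h]
          · simp only [h, if_false]
            exact mul_nonneg (hnn x w) (ih (m + 1) (by omega) w)
      simpa [fret] using this

lemma matPow_nonneg (hnn : ∀ x y, 0 ≤ B x y) : ∀ n x y, 0 ≤ matPow B n x y := by
  intro n
  induction n with
  | zero => intro x y; simp only [matPow]; split <;> norm_num
  | succ n ih =>
    intro x y
    simp only [matPow]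
    exact tsum_nonneg fun w => mul_nonneg (ih x w) (hnn w y)

section Hyps

variable (hnn : ∀ x y, 0 ≤ B x y) (hθ : 0 ≤ θ)
  (hupos : ∀ x, 0 < u x)
  (husum : ∀ x, Summable (fun y => B x y * u y))
  (hueig : ∀ x, ∑' y, B x y * u y = Real.exp (-θ) * u x)

include hnn hupos in
lemma Rrem_nonneg : ∀ n x, 0 ≤ Rrem B z u n x := by
  intro n
  induction n with
  | zero => exact fun x => (hupos x).le
  | succ n ih =>
    intro x
    refine tsum_nonneg fun w => ?_
    by_cases h : w = z
    · simp [h]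
    · simp only [h, if_false]; exact mul_nonneg (hnn x w) (ih w)

include hnn hθ hupos husum hueig in
lemma Rrem_le : ∀ n x, Rrem B z u n x ≤ u x := by
  intro n
  induction n with
  | zero => exact fun x => le_refl _
  | succ n ih =>
    intro x
    have hbd : ∀ w, (if w = z then 0 else B x w * Rrem B z u n w) ≤ B x w * u w := by
      intro w
      by_cases h : w = z
      · simp only [h, if_true]; exact mul_nonneg (hnn x z) (hupos z).le
      · simp only [h, if_false]
        exact mul_le_mul_of_nonneg_left (ih w) (hnn x w)
    have hsLHS : Summable (fun w => if w = z then 0 else B x w * Rrem B z u n w) := by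
      refine (husum x).of_nonneg_of_le (fun w => ?_) hbd
      by_cases h : w = z
      · simp [h]
      · simp only [h, if_false]
        exact mul_nonneg (hnn x w) (Rrem_nonneg hnn hupos n w)
    calc Rrem B z u (n + 1) x = ∑' w, if w = z then 0 else B x w * Rrem B z u n w := rfl
      _ ≤ ∑' w, B x w * u w := Summable.tsum_le_tsum hbd hsLHS (husum x)
      _ = Real.exp (-θ) * u x := hueig x
      _ ≤ 1 * u x := by
          apply mul_le_mul_of_nonneg_right _ (hupos x).le
          exact Real.exp_le_one_iff.mpr (by linarith)
      _ = u x := one_mul _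

include hnn hθ hupos husum hueig in
lemma keyC : ∀ n x, Rrem B z u n x
    = Real.exp θ * (u z * fret B z (n + 1) x + Rrem B z u (n + 1) x) := by
  intro n
  induction n with
  | zero =>
    intro x
    have h1 : ∑' y, B x y * u y
        = B x z * u z + ∑' y, if y = z then 0 else B x y * u y :=
      Summable.tsum_eq_add_tsum_ite (husum x) z
    have h2 : Rrem B z u 1 x = ∑' y, if y = z then 0 else B x y * u y := rfl
    have h3 : Real.exp (-θ) * u x = B x z * u z + Rrem B z u 1 x := by
      rw [← hueig x, h1, h2]
    have h4 : Real.exp θ * Real.exp (-θ) = 1 := by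
      rw [← Real.exp_add]; simp
    have : Rrem B z u 0 x = u x := rfl
    rw [this]
    have hfr : fret B z 1 x = B x z := rfl
    rw [hfr]
    calc u x = Real.exp θ * Real.exp (-θ) * u x := by rw [h4, one_mul]
      _ = Real.exp θ * (Real.exp (-θ) * u x) := by ring
      _ = Real.exp θ * (B x z * u z + Rrem B z u 1 x) := by rw [h3]
      _ = Real.exp θ * (u z * B x z + Rrem B z u 1 x) := by ring_nf
  | succ n ih =>
    intro x
    -- bound: u z * fret (n+1) w ≤ u w, hence summability of the fret-summand
    have hfb : ∀ w, u z * fret B z (n + 1) w ≤ u w := by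
      intro w
      have h := ih w
      have h1 : u z * fret B z (n + 1) w
          = Real.exp (-θ) * Rrem B z u n w - Rrem B z u (n + 1) w := by
        have h4 : Real.exp (-θ) * Real.exp θ = 1 := by
          rw [← Real.exp_add]; simp
        calc u z * fret B z (n + 1) w
            = Real.exp (-θ) * (Real.exp θ * (u z * fret B z (n + 1) w + Rrem B z u (n + 1) w))
              - Rrem B z u (n + 1) w := by
              rw [← mul_assoc, h4]; ring
          _ = _ := by rw [← h]
      rw [h1]
      have h2 : Real.exp (-θ) * Rrem B z u n w ≤ Rrem B z u n w := by
        have := Real.exp_le_one_iff.mpr (show -θ ≤ 0 by linarith)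
        nlinarith [Rrem_nonneg (B := B) (z := z) (u := u) hnn hupos n w]
      have h3 := Rrem_nonneg hnn hupos (B := B) (z := z) (u := u) (n + 1) w
      have := Rrem_le hnn hθ hupos husum hueig (B := B) (z := z) n w
      linarith
    have hSg : Summable (fun w => if w = z then 0 else B x w * fret B z (n + 1) w) := by
      refine ((husum x).mul_left (u z)⁻¹).of_nonneg_of_le (fun w => ?_) (fun w => ?_)
      · by_cases h : w = z
        · simp [h]
        · simp only [h, if_false]
          exact mul_nonneg (hnn x w) (fret_nonneg hnn (n + 1) w)
      · by_cases h : w = z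
        · simp only [h, if_true]
          exact mul_nonneg (inv_nonneg.mpr (hupos z).le) (mul_nonneg (hnn x z) (hupos z).le)
        · simp only [h, if_false]
          have hf : fret B z (n + 1) w ≤ (u z)⁻¹ * u w := by
            rw [← div_eq_inv_mul, le_div_iff₀ (hupos z)]
            calc fret B z (n + 1) w * u z = u z * fret B z (n + 1) w := by ring
              _ ≤ u w := hfb w
          calc B x w * fret B z (n + 1) w ≤ B x w * ((u z)⁻¹ * u w) :=
                mul_le_mul_of_nonneg_left hf (hnn x w)
            _ = (u z)⁻¹ * (B x w * u w) := by ring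
    have hSh : Summable (fun w => if w = z then 0 else B x w * Rrem B z u (n + 1) w) := by
      refine (husum x).of_nonneg_of_le (fun w => ?_) (fun w => ?_)
      · by_cases h : w = z
        · simp [h]
        · simp only [h, if_false]
          exact mul_nonneg (hnn x w) (Rrem_nonneg hnn hupos (n + 1) w)
      · by_cases h : w = z
        · simp only [h, if_true]; exact mul_nonneg (hnn x z) (hupos z).le
        · simp only [h, if_false]
          exact mul_le_mul_of_nonneg_left (Rrem_le hnn hθ hupos husum hueig (n + 1) w) (hnn x w)
    have hpt : ∀ w, (if w = z then 0 else B x w * Rrem B z u n w)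
        = Real.exp θ * (u z * (if w = z then 0 else B x w * fret B z (n + 1) w)
            + (if w = z then 0 else B x w * Rrem B z u (n + 1) w)) := by
      intro w
      by_cases h : w = z
      · simp [h]
      · simp only [h, if_false]
        rw [ih w]; ring
    calc Rrem B z u (n + 1) x = ∑' w, if w = z then 0 else B x w * Rrem B z u n w := rfl
      _ = ∑' w, Real.exp θ * (u z * (if w = z then 0 else B x w * fret B z (n + 1) w)
            + (if w = z then 0 else B x w * Rrem B z u (n + 1) w)) := by
          exact tsum_congr hpt
      _ = Real.exp θ * ∑' w, (u z * (if w = z then 0 else B x w * fret B z (n + 1) w)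
            + (if w = z then 0 else B x w * Rrem B z u (n + 1) w)) := tsum_mul_left
      _ = Real.exp θ * (u z * (∑' w, if w = z then 0 else B x w * fret B z (n + 1) w)
            + ∑' w, if w = z then 0 else B x w * Rrem B z u (n + 1) w) := by
          rw [Summable.tsum_add (hSg.mul_left (u z)) hSh, tsum_mul_left]
      _ = Real.exp θ * (u z * fret B z (n + 2) x + Rrem B z u (n + 2) x) := by
          have e1 : fret B z (n + 2) x = ∑' w, if w = z then 0 else B x w * fret B z (n + 1) w := by
            simp [fret]
          have e2 : Rrem B z u (n + 2) x
              = ∑' w, if w = z then 0 else B x w * Rrem B z u (n + 1) w := rfl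
          rw [e1, e2]

include hnn hθ hupos husum hueig in
lemma telescope : ∀ n x, u z * (∑ k ∈ Finset.range n, Real.exp (θ * ((k : ℝ) + 1)) * fret B z (k + 1) x)
    = u x - Real.exp (θ * (n : ℝ)) * Rrem B z u n x := by
  intro n
  induction n with
  | zero =>
    intro x
    simp [Rrem]
  | succ n ih =>
    intro x
    rw [Finset.sum_range_succ, mul_add, ih x]
    have hC := keyC hnn hθ hupos husum hueig (B := B) (z := z) n x
    have e1 : Real.exp (θ * ((n : ℝ) + 1)) = Real.exp (θ * (n : ℝ)) * Real.exp θ := by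
      rw [← Real.exp_add]; ring_nf
    have e2 : Real.exp (θ * ((n + 1 : ℕ) : ℝ)) = Real.exp (θ * (n : ℝ)) * Real.exp θ := by
      rw [← Real.exp_add]; push_cast; ring_nf
    rw [e1, e2, hC]
    ring

include hnn hθ hupos husum hueig in
lemma fret_summable : ∀ x, Summable (fun k : ℕ => Real.exp (θ * ((k : ℝ) + 1)) * fret B z (k + 1) x) := by
  intro x
  refine summable_of_sum_range_le (c := u x / u z) (fun k => ?_) (fun n => ?_)
  · exact mul_nonneg (Real.exp_pos _).le (fret_nonneg hnn (k + 1) x)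
  · rw [le_div_iff₀ (hupos z)]
    have h := telescope hnn hθ hupos husum hueig (B := B) (z := z) n x
    have h2 : 0 ≤ Real.exp (θ * (n : ℝ)) * Rrem B z u n x :=
      mul_nonneg (Real.exp_pos _).le (Rrem_nonneg hnn hupos n x)
    calc (∑ i ∈ Finset.range n, Real.exp (θ * ((i : ℝ) + 1)) * fret B z (i + 1) x) * u z
        = u z * ∑ i ∈ Finset.range n, Real.exp (θ * ((i : ℝ) + 1)) * fret B z (i + 1) x := by ring
      _ = u x - Real.exp (θ * (n : ℝ)) * Rrem B z u n x := h
      _ ≤ u x := by linarith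

include hnn hθ hupos husum hueig in
lemma uStar_le' : ∀ x, uStar B z θ x ≤ u x / u z := by
  intro x
  refine Summable.tsum_le_of_sum_range_le (fret_summable hnn hθ hupos husum hueig x) (fun n => ?_)
  rw [le_div_iff₀ (hupos z)]
  have h := telescope hnn hθ hupos husum hueig (B := B) (z := z) n x
  have h2 : 0 ≤ Real.exp (θ * (n : ℝ)) * Rrem B z u n x :=
    mul_nonneg (Real.exp_pos _).le (Rrem_nonneg hnn hupos n x)
  calc (∑ i ∈ Finset.range n, Real.exp (θ * ((i : ℝ) + 1)) * fret B z (i + 1) x) * u z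
      = u z * ∑ i ∈ Finset.range n, Real.exp (θ * ((i : ℝ) + 1)) * fret B z (i + 1) x := by ring
    _ = u x - Real.exp (θ * (n : ℝ)) * Rrem B z u n x := h
    _ ≤ u x := by linarith

include hnn hθ hupos husum hueig in
lemma fret_le : ∀ n x, fret B z (n + 1) x ≤ u x / u z := by
  intro n x
  have h1 : Real.exp (θ * ((n : ℝ) + 1)) * fret B z (n + 1) x ≤ uStar B z θ x := by
    refine Summable.le_tsum (fret_summable hnn hθ hupos husum hueig x) n (fun j _ => ?_)
    exact mul_nonneg (Real.exp_pos _).le (fret_nonneg hnn (j + 1) x)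
  have h2 : fret B z (n + 1) x ≤ Real.exp (θ * ((n : ℝ) + 1)) * fret B z (n + 1) x := by
    have : (1 : ℝ) ≤ Real.exp (θ * ((n : ℝ) + 1)) := by
      apply Real.one_le_exp
      positivity
    nlinarith [fret_nonneg hnn (B := B) (z := z) (n + 1) x]
  exact h2.trans (h1.trans (uStar_le' hnn hθ hupos husum hueig x))

include hnn in
lemma uStar_nonneg : ∀ x, 0 ≤ uStar B z θ x := fun x =>
  tsum_nonneg fun n => mul_nonneg (Real.exp_pos _).le (fret_nonneg hnn (n + 1) x)

include hnn hθ hupos husum hueig in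
lemma uStar_mul_summable : ∀ x, Summable (fun y => B x y * uStar B z θ y) := by
  intro x
  refine ((husum x).mul_left (u z)⁻¹).of_nonneg_of_le (fun y => ?_) (fun y => ?_)
  · exact mul_nonneg (hnn x y) (uStar_nonneg hnn y)
  · have h := uStar_le' (z := z) hnn hθ hupos husum hueig y
    calc B x y * uStar B z θ y ≤ B x y * (u y / u z) := mul_le_mul_of_nonneg_left h (hnn x y)
      _ = (u z)⁻¹ * (B x y * u y) := by ring

include hnn hθ hupos husum hueig in
lemma uStar_eigen (hA1 : ∑' n : ℕ, Real.exp (θ * ((n : ℝ) + 1)) * fret B z (n + 1) z = 1) :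
    ∀ x, ∑' y, B x y * uStar B z θ y = Real.exp (-θ) * uStar B z θ x := by
  intro x
  set a : ℕ → ℝ := fun k => Real.exp (θ * ((k : ℝ) + 1)) * fret B z (k + 1) x with ha_def
  have ha : Summable a := fret_summable hnn hθ hupos husum hueig x
  set g : S → ℕ → ℝ := fun y n => B x y * (Real.exp (θ * ((n : ℝ) + 1)) * fret B z (n + 1) y)
    with hg
  have hgnn : ∀ y n, 0 ≤ g y n := fun y n =>
    mul_nonneg (hnn x y) (mul_nonneg (Real.exp_pos _).le (fret_nonneg hnn _ y))
  have h1 : ∀ y, Summable (g y) := fun y =>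
    (fret_summable hnn hθ hupos husum hueig y).mul_left _
  have hrowsum : Summable (fun y => ∑' n, g y n) := by
    have he : ∀ y, ∑' n, g y n = B x y * uStar B z θ y := fun y => by rw [hg]; exact tsum_mul_left
    exact (uStar_mul_summable hnn hθ hupos husum hueig x).congr (fun y => (he y).symm)
  have hG : Summable (Function.uncurry g) :=
    (summable_prod_of_nonneg (fun p => hgnn p.1 p.2)).mpr ⟨h1, hrowsum⟩
  have h2 : ∀ n : ℕ, Summable (fun y => g y n) := by
    intro n
    refine ((husum x).mul_left ((u z)⁻¹ * Real.exp (θ * ((n : ℝ) + 1)))).of_nonneg_of_le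
      (fun y => hgnn y n) (fun y => ?_)
    have hf := fret_le (z := z) hnn hθ hupos husum hueig n y
    calc g y n = Real.exp (θ * ((n : ℝ) + 1)) * (B x y * fret B z (n + 1) y) := by rw [hg]; ring
      _ ≤ Real.exp (θ * ((n : ℝ) + 1)) * (B x y * (u y / u z)) :=
          mul_le_mul_of_nonneg_left (mul_le_mul_of_nonneg_left hf (hnn x y)) (Real.exp_pos _).le
      _ = (u z)⁻¹ * Real.exp (θ * ((n : ℝ) + 1)) * (B x y * u y) := by ring
  have hswap : ∑' y, ∑' n, g y n = ∑' n, ∑' y, g y n := (Summable.tsum_comm' hG h1 h2).symm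
  have hinner : ∀ n : ℕ, ∑' y, g y n
      = B x z * (Real.exp (θ * ((n : ℝ) + 1)) * fret B z (n + 1) z)
        + Real.exp (-θ) * a (n + 1) := by
    intro n
    have hs : Summable (fun y => B x y * fret B z (n + 1) y) := by
      refine ((husum x).mul_left (u z)⁻¹).of_nonneg_of_le
        (fun y => mul_nonneg (hnn x y) (fret_nonneg hnn _ y)) (fun y => ?_)
      have hf := fret_le (z := z) hnn hθ hupos husum hueig n y
      calc B x y * fret B z (n + 1) y ≤ B x y * (u y / u z) :=
            mul_le_mul_of_nonneg_left hf (hnn x y)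
        _ = (u z)⁻¹ * (B x y * u y) := by ring
    have hsplit := Summable.tsum_eq_add_tsum_ite hs z
    have hfr : fret B z (n + 2) x = ∑' y, if y = z then 0 else B x y * fret B z (n + 1) y := by
      simp [fret]
    have step1 : ∑' y, g y n
        = Real.exp (θ * ((n : ℝ) + 1)) * (B x z * fret B z (n + 1) z + fret B z (n + 2) x) := by
      calc ∑' y, g y n = ∑' y, Real.exp (θ * ((n : ℝ) + 1)) * (B x y * fret B z (n + 1) y) :=
            tsum_congr fun y => by rw [hg]; ring
        _ = Real.exp (θ * ((n : ℝ) + 1)) * ∑' y, B x y * fret B z (n + 1) y := tsum_mul_left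
        _ = _ := by rw [hsplit, ← hfr]
    rw [step1]
    have hexp : Real.exp (θ * ((n : ℝ) + 1))
        = Real.exp (-θ) * Real.exp (θ * (((n + 1 : ℕ) : ℝ) + 1)) := by
      rw [← Real.exp_add]; push_cast; ring_nf
    have han : a (n + 1) = Real.exp (θ * (((n + 1 : ℕ) : ℝ) + 1)) * fret B z (n + 2) x := rfl
    rw [han, hexp]; ring
  have hsum1 : Summable (fun n : ℕ =>
      B x z * (Real.exp (θ * ((n : ℝ) + 1)) * fret B z (n + 1) z)) :=
    (fret_summable hnn hθ hupos husum hueig z).mul_left _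
  have hshift : Summable (fun n : ℕ => a (n + 1)) := (summable_nat_add_iff 1).mpr ha
  have hsum2 : Summable (fun n : ℕ => Real.exp (-θ) * a (n + 1)) := hshift.mul_left _
  have htail : ∑' n : ℕ, a (n + 1) = uStar B z θ x - a 0 := by
    have h0 := Summable.tsum_eq_zero_add ha
    have hu : uStar B z θ x = ∑' n, a n := rfl
    rw [hu]; linarith
  have ha0 : a 0 = Real.exp θ * B x z := by
    have : fret B z 1 x = B x z := rfl
    simp only [ha_def, Nat.cast_zero, zero_add, this, mul_one]
  have hstart : ∑' y, B x y * uStar B z θ y = ∑' y, ∑' n, g y n :=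
    tsum_congr fun y => by rw [hg]; exact tsum_mul_left.symm
  rw [hstart, hswap]
  calc ∑' n, ∑' y, g y n
      = ∑' n : ℕ, (B x z * (Real.exp (θ * ((n : ℝ) + 1)) * fret B z (n + 1) z)
          + Real.exp (-θ) * a (n + 1)) := tsum_congr hinner
    _ = (∑' n : ℕ, B x z * (Real.exp (θ * ((n : ℝ) + 1)) * fret B z (n + 1) z))
        + ∑' n : ℕ, Real.exp (-θ) * a (n + 1) := Summable.tsum_add hsum1 hsum2
    _ = B x z * (∑' n : ℕ, Real.exp (θ * ((n : ℝ) + 1)) * fret B z (n + 1) z)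
        + Real.exp (-θ) * ∑' n : ℕ, a (n + 1) := by rw [tsum_mul_left, tsum_mul_left]
    _ = B x z * 1 + Real.exp (-θ) * (uStar B z θ x - Real.exp θ * B x z) := by
        rw [hA1, htail, ha0]
    _ = Real.exp (-θ) * uStar B z θ x := by
        have h4 : Real.exp (-θ) * Real.exp θ = 1 := by rw [← Real.exp_add]; simp
        have he : B x z * 1 + Real.exp (-θ) * (uStar B z θ x - Real.exp θ * B x z)
            = Real.exp (-θ) * uStar B z θ x + (1 - Real.exp (-θ) * Real.exp θ) * B x z := by
          ring
        rw [he, h4]; ring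

end Hyps

end Aux

/-- Theorem 2(i): under A1 and A2, any strictly positive finite column eigenvector
of `B` with eigenvalue `λ* = e^{-θ}` is a positive multiple of `u*`. -/
theorem stmt6 {S : Type*} [Countable S] [Nonempty S] [DecidableEq S]
    (B : S → S → ℝ)
    (hnn : ∀ x y, 0 ≤ B x y)
    (hrow : ∀ x, Summable (fun y => B x y))
    (hsub : ∀ x, ∑' y, B x y ≤ 1)
    (hirr : ∀ x y, ∃ n, 1 ≤ n ∧ 0 < matPow B n x y)
    (z : S) (θ : ℝ) (hθ : 0 ≤ θ)
    (hA1 : ∑' n : ℕ, Real.exp (θ * ((n : ℝ) + 1)) * fret B z (n + 1) z = 1)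
    (hA2 : Summable (fun n : ℕ =>
      ((n : ℝ) + 1) * Real.exp (θ * ((n : ℝ) + 1)) * fret B z (n + 1) z))
    (u : S → ℝ) (hupos : ∀ x, 0 < u x)
    (husum : ∀ x, Summable (fun y => B x y * u y))
    (hueig : ∀ x, ∑' y, B x y * u y = Real.exp (-θ) * u x) :
    ∃ c : ℝ, 0 < c ∧ ∀ x, u x = c * uStar B z θ x := by
  classical
  set r : S → ℝ := fun x => u x - u z * uStar B z θ x with hr
  have hr0 : ∀ x, 0 ≤ r x := by
    intro x
    have h := uStar_le' (z := z) hnn hθ hupos husum hueig x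
    have h2 : uStar B z θ x * u z ≤ u x := (le_div_iff₀ (hupos z)).mp h
    simp only [hr]
    nlinarith
  have hrz : r z = 0 := by
    have h1 : uStar B z θ z = 1 := hA1
    simp [hr, h1]
  have hrsum : ∀ x, Summable (fun y => B x y * r y) := by
    intro x
    have h := (husum x).sub
      ((uStar_mul_summable (z := z) hnn hθ hupos husum hueig x).mul_left (u z))
    refine h.congr fun y => ?_
    simp only [hr]; ring
  have hreig : ∀ x, ∑' y, B x y * r y = Real.exp (-θ) * r x := by
    intro x
    have h1 : ∀ y, B x y * r y = B x y * u y - u z * (B x y * uStar B z θ y) := fun y => by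
      simp only [hr]; ring
    rw [tsum_congr h1, Summable.tsum_sub (husum x)
        ((uStar_mul_summable (z := z) hnn hθ hupos husum hueig x).mul_left (u z)),
      tsum_mul_left, hueig x, uStar_eigen hnn hθ hupos husum hueig hA1 x]
    simp only [hr]; ring
  have hrle : ∀ v w, B v w * r w ≤ Real.exp (-θ) * r v := by
    intro v w
    rw [← hreig v]
    exact Summable.le_tsum (hrsum v) w (fun j _ => mul_nonneg (hnn v j) (hr0 j))
  have hD : ∀ n x, Summable (fun w => matPow B n x w * r w) ∧
      ∑' w, matPow B n x w * r w ≤ (Real.exp (-θ)) ^ n * r x := by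
    intro n
    induction n with
    | zero =>
      intro x
      constructor
      · refine summable_of_ne_finset_zero (s := {x}) (fun b hb => ?_)
        simp only [Finset.mem_singleton] at hb
        simp only [matPow]
        rw [if_neg (fun h => hb h.symm), zero_mul]
      · have he : ∑' w, matPow B 0 x w * r w = r x := by
          rw [tsum_eq_single x (fun b' hb' => by
            simp only [matPow]
            rw [if_neg (fun h => hb' h.symm), zero_mul])]
          simp [matPow]
        rw [he, pow_zero, one_mul]
    | succ n ih =>
      intro x
      set G : S → S → ℝ := fun v w => matPow B n x v * (B v w * r w) with hGdef
      have hGnn : ∀ v w, 0 ≤ G v w := fun v w =>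
        mul_nonneg (matPow_nonneg hnn n x v) (mul_nonneg (hnn v w) (hr0 w))
      have hrowS : ∀ v, Summable (G v) := fun v => (hrsum v).mul_left _
      have he : ∀ v, ∑' w, G v w = Real.exp (-θ) * (matPow B n x v * r v) := by
        intro v
        calc ∑' w, G v w = matPow B n x v * ∑' w, B v w * r w := tsum_mul_left
          _ = matPow B n x v * (Real.exp (-θ) * r v) := by rw [hreig v]
          _ = Real.exp (-θ) * (matPow B n x v * r v) := by ring
      have hrowsum : Summable (fun v => ∑' w, G v w) :=
        (((ih x).1).mul_left (Real.exp (-θ))).congr (fun v => (he v).symm)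
      have hG : Summable (Function.uncurry G) :=
        (summable_prod_of_nonneg (fun p => hGnn p.1 p.2)).mpr ⟨hrowS, hrowsum⟩
      have hcol : ∀ w, Summable (fun v => G v w) := by
        intro w
        refine (((ih x).1).mul_left (Real.exp (-θ))).of_nonneg_of_le
          (fun v => hGnn v w) (fun v => ?_)
        calc G v w ≤ matPow B n x v * (Real.exp (-θ) * r v) :=
              mul_le_mul_of_nonneg_left (hrle v w) (matPow_nonneg hnn n x v)
          _ = Real.exp (-θ) * (matPow B n x v * r v) := by ring
      have hmarg : ∀ w, matPow B (n + 1) x w * r w = ∑' v, G v w := by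
        intro w
        have h0 : matPow B (n + 1) x w = ∑' v, matPow B n x v * B v w := rfl
        rw [h0, ← tsum_mul_right]
        exact tsum_congr fun v => by simp only [hGdef]; ring
      have hsumm : Summable (fun w => matPow B (n + 1) x w * r w) := by
        have h2 := ((summable_prod_of_nonneg
            (f := fun p : S × S => Function.uncurry G p.swap)
            (fun p => hGnn p.2 p.1)).mp hG.prod_symm).2
        exact h2.congr fun w => (hmarg w).symm
      refine ⟨hsumm, ?_⟩
      calc ∑' w, matPow B (n + 1) x w * r w = ∑' w, ∑' v, G v w := tsum_congr hmarg
        _ = ∑' v, ∑' w, G v w := Summable.tsum_comm' hG hrowS hcol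
        _ = ∑' v, Real.exp (-θ) * (matPow B n x v * r v) := tsum_congr he
        _ = Real.exp (-θ) * ∑' v, matPow B n x v * r v := tsum_mul_left
        _ ≤ Real.exp (-θ) * ((Real.exp (-θ)) ^ n * r x) :=
            mul_le_mul_of_nonneg_left (ih x).2 (Real.exp_pos _).le
        _ = (Real.exp (-θ)) ^ (n + 1) * r x := by ring
  refine ⟨u z, hupos z, fun x => ?_⟩
  obtain ⟨n, hn1, hpos⟩ := hirr z x
  have h1 : matPow B n z x * r x ≤ (Real.exp (-θ)) ^ n * r z :=
    le_trans (Summable.le_tsum (hD n z).1 x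
      (fun j _ => mul_nonneg (matPow_nonneg hnn n z j) (hr0 j))) (hD n z).2
  rw [hrz, mul_zero] at h1
  have h3 : r x = 0 := by nlinarith [hr0 x, hpos]
  have h4 : u x - u z * uStar B z θ x = 0 := h3
  linarith
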